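/- Let f : X → 𝒢(Z,C) be a convex function, x ∈ dom f and u ∈ X. Then f′(x,u) = cl ⋃_{t>0} (1/t)·(f(x+tu) ⊖ f(x)), f′(x,0) = 0⁺f(x), and the map u ↦ f′(x,u) is sublinear: f′(x,su) = s·f′(x,u) for all s > 0, and f′(x, su₁ + (1−s)u₂) ⊇ cl(s·f′(x,u₁) + (1−s)·f′(x,u₂)) for all u₁, u₂ ∈ X and s ∈ (0,1). -/

import Mathlib

open Set Pointwise

noncomputable section

variable {Z : Type*} [AddCommGroup Z] [Module ℝ Z] [TopologicalSpace Z]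

/-- The inf-residual `A ⊖ B = {z : B + {z} ⊆ A}`. -/
def resid (A B : Set Z) : Set Z := {z : Z | B + {z} ⊆ A}

/-- The recession cone `0⁺A`, with the convention `0⁺∅ = ∅`. -/
def recCone (A : Set Z) : Set Z := {z : Z | A.Nonempty ∧ A + {z} ⊆ A}

/-- `A ⊕ B = cl (A + B)`. -/
def oplus (A B : Set Z) : Set Z := closure (A + B)

/-- Membership in `𝒢(Z,C)`: `A = cl co (A + C)`. -/
def IsG (C A : Set Z) : Prop := A = closure (convexHull ℝ (A + C))

/-- The set `C⁻ \ {0}` of nonzero elements of the negative dual cone. -/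
def negDualNZ (C : Set Z) : Set (Z →L[ℝ] ℝ) :=
  {p : Z →L[ℝ] ℝ | (∀ c ∈ C, p c ≤ 0) ∧ p ≠ 0}

/-- `inf {-z*(z) : z ∈ A}` as an extended real. -/
def scal (p : Z →L[ℝ] ℝ) (A : Set Z) : EReal :=
  sInf ((fun z => ((-(p z) : ℝ) : EReal)) '' A)

/-- Support function `σ(z*|A) = sup {z*(z) : z ∈ A}` as an extended real. -/
def suppF (p : Z →L[ℝ] ℝ) (A : Set Z) : EReal :=
  sSup ((fun z => ((p z : ℝ) : EReal)) '' A)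

/-- Inf-residuation on the extended reals: `r ⊖ s = inf {t ∈ ℝ : r ≤ s + t}`. -/
def eresid (r s : EReal) : EReal :=
  sInf ((fun t : ℝ => (t : EReal)) '' {t : ℝ | r ≤ s + (t : EReal)})

variable {X : Type*} [AddCommGroup X] [Module ℝ X]

/-- The scalarization `φ_{f,z*}(x) = inf {-z*(z) : z ∈ f(x)}`. -/
def phi (f : X → Set Z) (p : Z →L[ℝ] ℝ) (x : X) : EReal := scal p (f x)

/-- Convexity for set-valued functions:
`f(t x₁ + (1-t) x₂) ⊇ cl (t f(x₁) + (1-t) f(x₂))`. -/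
def ConvexSV (f : X → Set Z) : Prop :=
  ∀ x₁ x₂ : X, ∀ t : ℝ, t ∈ Ioo (0:ℝ) 1 →
    closure (t • f x₁ + (1 - t) • f x₂) ⊆ f (t • x₁ + (1 - t) • x₂)

/-- The set-valued directional derivative
`f′(x,u) = ⋂_{t₀>0} cl co ⋃_{0<t<t₀} (1/t)•(f(x+tu) ⊖ f(x))`. -/
def sder (f : X → Set Z) (x u : X) : Set Z :=
  ⋂ t₀ ∈ Ioi (0:ℝ), closure (convexHull ℝ
    (⋃ t ∈ Ioo (0:ℝ) t₀, (1 / t) • resid (f (x + t • u)) (f x)))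

/-- The scalar Dini derivative `φ′_{f,z*}(x,u) = inf_{t>0} (1/t)(φ(x+tu) ⊖ φ(x))`. -/
def phiDer (f : X → Set Z) (p : Z →L[ℝ] ℝ) (x u : X) : EReal :=
  ⨅ t ∈ Ioi (0:ℝ), (((1 / t : ℝ)) : EReal) * eresid (phi f p (x + t • u)) (phi f p x)

end
section AuxLemmas

open Set Pointwise

variable {Z : Type*} [AddCommGroup Z] [Module ℝ Z] [TopologicalSpace Z]

lemma mem_smul_resid {A B : Set Z} {t : ℝ} (ht : 0 < t) {z : Z} :
    z ∈ (1 / t) • resid A B ↔ ∀ b ∈ B, b + t • z ∈ A := by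
  constructor
  · intro hz b hb
    obtain ⟨w, hw, rfl⟩ := hz
    have h2 := hw (Set.add_mem_add hb (Set.mem_singleton w))
    rwa [smul_smul, mul_one_div_cancel ht.ne', one_smul]
  · intro h
    refine ⟨t • z, ?_, by show (1 / t) • t • z = z; rw [smul_smul, one_div_mul_cancel ht.ne', one_smul]⟩
    rintro y ⟨b, hb, w, hw, rfl⟩
    rw [Set.mem_singleton_iff] at hw; subst hw
    exact h b hb

lemma resid_convex {A B : Set Z} (hA : Convex ℝ A) : Convex ℝ (resid A B) := by
  intro z₁ h₁ z₂ h₂ a b ha hb hab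
  rintro y ⟨c, hc, w, hw, rfl⟩
  rw [Set.mem_singleton_iff] at hw; subst hw
  show c + (a • z₁ + b • z₂) ∈ A
  have e : c + (a • z₁ + b • z₂) = a • (c + z₁) + b • (c + z₂) := by
    match_scalars <;> linarith
  rw [e]
  exact hA (h₁ (Set.add_mem_add hc (Set.mem_singleton z₁)))
    (h₂ (Set.add_mem_add hc (Set.mem_singleton z₂))) ha hb hab

lemma isClosed_resid [IsTopologicalAddGroup Z] {A B : Set Z} (hA : IsClosed A) :
    IsClosed (resid A B) := by
  have h : resid A B = ⋂ b ∈ B, (fun z => b + z) ⁻¹' A := by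
    ext z
    simp only [resid, mem_setOf_eq, mem_iInter, mem_preimage]
    constructor
    · intro h b hb; exact h (Set.add_mem_add hb (Set.mem_singleton z))
    · rintro h y ⟨b, hb, w, hw, rfl⟩
      rw [Set.mem_singleton_iff] at hw; subst hw
      exact h b hb
  rw [h]
  exact isClosed_biInter fun b _ => hA.preimage (continuous_add_left b)

lemma resid_self_smul_mem {A : Set Z} (hA : Convex ℝ A) {z : Z}
    (hz : z ∈ resid A A) {r : ℝ} (hr : 0 < r) : r • z ∈ resid A A := by
  have key : ∀ n : ℕ, ∀ r : ℝ, 0 < r → r ≤ n → A + {r • z} ⊆ A := by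
    intro n
    induction n with
    | zero =>
      intro r hr hrn
      exfalso; simp only [Nat.cast_zero] at hrn; linarith
    | succ n ih =>
      intro r hr hrn
      rintro y ⟨a, ha, w, hw, rfl⟩
      rw [Set.mem_singleton_iff] at hw; subst hw
      show a + r • z ∈ A
      rcases le_or_gt r 1 with h1 | h1
      · have e : a + r • z = (1 - r) • a + r • (a + z) := by module
        rw [e]
        exact hA ha (hz (Set.add_mem_add ha (Set.mem_singleton z))) (by linarith) hr.le (by ring)
      · have h2 := ih (r - 1) (by linarith) (by push_cast at hrn ⊢; linarith)
        have e : a + r • z = (a + z) + (r - 1) • z := by module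
        rw [e]
        exact h2 (Set.add_mem_add (hz (Set.add_mem_add ha (Set.mem_singleton z)))
          (Set.mem_singleton _))
  exact key ⌈r⌉₊ r hr (Nat.le_ceil r)

lemma closure_add_closure_subset [IsTopologicalAddGroup Z] (A B : Set Z) :
    closure A + closure B ⊆ closure (A + B) := by
  rintro y ⟨a, ha, b, hb, rfl⟩
  have hm : (a, b) ∈ closure (A ×ˢ B) := by
    rw [closure_prod_eq]; exact ⟨ha, hb⟩
  have := image_closure_subset_closure_image
    (f := fun p : Z × Z => p.1 + p.2) continuous_add (mem_image_of_mem _ hm)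
  rwa [Set.add_image_prod] at this

variable {X : Type*} [AddCommGroup X] [Module ℝ X]

lemma quot_mono (f : X → Set Z) (hf : ConvexSV f) (x u : X) {t s : ℝ}
    (ht : 0 < t) (hts : t ≤ s) :
    (1 / s) • resid (f (x + s • u)) (f x) ⊆ (1 / t) • resid (f (x + t • u)) (f x) := by
  rcases eq_or_lt_of_le hts with rfl | hlt
  · exact subset_rfl
  have hs : 0 < s := ht.trans hlt
  intro z hz
  rw [mem_smul_resid hs] at hz
  rw [mem_smul_resid ht]
  intro b hb
  set l := t / s with hldef
  have hls : l * s = t := div_mul_cancel₀ t hs.ne'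
  have hlmem : l ∈ Ioo (0:ℝ) 1 := ⟨div_pos ht hs, (div_lt_one hs).2 hlt⟩
  have hcal : l • (x + s • u) + (1 - l) • x = x + t • u := by
    rw [← hls]; module
  have hsub := hf (x + s • u) x l hlmem
  rw [hcal] at hsub
  have he : b + t • z = l • (b + s • z) + (1 - l) • b := by
    rw [← hls]; module
  rw [he]
  exact hsub (subset_closure
    (Set.add_mem_add (Set.smul_mem_smul_set (hz b hb)) (Set.smul_mem_smul_set hb)))

lemma union_quot_eq (f : X → Set Z) (hf : ConvexSV f) (x u : X) {t₀ : ℝ} (ht₀ : 0 < t₀) :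
    ⋃ t ∈ Ioo (0:ℝ) t₀, (1 / t) • resid (f (x + t • u)) (f x)
      = ⋃ t ∈ Ioi (0:ℝ), (1 / t) • resid (f (x + t • u)) (f x) := by
  apply Subset.antisymm
  · exact iUnion₂_subset fun t ht => subset_iUnion₂_of_subset t ht.1 subset_rfl
  · refine iUnion₂_subset fun s hs => ?_
    have hs' : 0 < s := hs
    rcases lt_or_ge s t₀ with h | h
    · exact subset_iUnion₂_of_subset s ⟨hs', h⟩ subset_rfl
    · exact subset_iUnion₂_of_subset (t₀ / 2) ⟨half_pos ht₀, half_lt_self ht₀⟩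
        (quot_mono f hf x u (half_pos ht₀) (by linarith))

lemma union_quot_convex (f : X → Set Z) (hf : ConvexSV f)
    (hconv : ∀ y, Convex ℝ (f y)) (x u : X) :
    Convex ℝ (⋃ t ∈ Ioi (0:ℝ), (1 / t) • resid (f (x + t • u)) (f x)) := by
  intro z₁ h₁ z₂ h₂ a b ha hb hab
  simp only [mem_iUnion, exists_prop] at h₁ h₂ ⊢
  obtain ⟨t₁, ht₁, hz₁⟩ := h₁
  obtain ⟨t₂, ht₂, hz₂⟩ := h₂
  have htm : (0:ℝ) < min t₁ t₂ := lt_min ht₁ ht₂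
  refine ⟨min t₁ t₂, htm, ?_⟩
  have hz₁' := quot_mono f hf x u htm (min_le_left _ _) hz₁
  have hz₂' := quot_mono f hf x u htm (min_le_right _ _) hz₂
  exact ((resid_convex (hconv _)).smul _) hz₁' hz₂' ha hb hab

lemma sder_eq (f : X → Set Z) (hf : ConvexSV f) (hconv : ∀ y, Convex ℝ (f y)) (x u : X) :
    sder f x u = closure (⋃ t ∈ Ioi (0:ℝ), (1 / t) • resid (f (x + t • u)) (f x)) := by
  have h : ∀ t₀ ∈ Ioi (0:ℝ),
      closure (convexHull ℝ (⋃ t ∈ Ioo (0:ℝ) t₀, (1 / t) • resid (f (x + t • u)) (f x)))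
        = closure (⋃ t ∈ Ioi (0:ℝ), (1 / t) • resid (f (x + t • u)) (f x)) := by
    intro t₀ ht₀
    rw [union_quot_eq f hf x u ht₀, (union_quot_convex f hf hconv x u).convexHull_eq]
  ext z
  simp only [sder, mem_iInter]
  constructor
  · intro hz
    have h1 := hz 1 (mem_Ioi.2 one_pos)
    rwa [h 1 (mem_Ioi.2 one_pos)] at h1
  · intro hz t₀ ht₀
    rw [h t₀ ht₀]; exact hz

end AuxLemmas

theorem stmt_8
  {Z : Type*} [AddCommGroup Z] [Module ℝ Z] [TopologicalSpace Z]
  [IsTopologicalAddGroup Z] [ContinuousSMul ℝ Z] [LocallyConvexSpace ℝ Z] [T2Space Z]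
  {X : Type*} [AddCommGroup X] [Module ℝ X]
  (C : Set Z) (hCclosed : IsClosed C) (hCconv : Convex ℝ C)
  (hCcone : ∀ c ∈ C, ∀ r : ℝ, 0 < r → r • c ∈ C) (hC0 : (0:Z) ∈ C)
  (f : X → Set Z) (hG : ∀ x, IsG C (f x)) (hf : ConvexSV f)
  (x : X) (hx : (f x).Nonempty) (u : X) :
    sder f x u = closure (⋃ t ∈ Ioi (0:ℝ), (1 / t) • resid (f (x + t • u)) (f x))
    ∧ sder f x 0 = recCone (f x)
    ∧ (∀ s : ℝ, 0 < s → sder f x (s • u) = s • sder f x u)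
    ∧ (∀ u₁ u₂ : X, ∀ s ∈ Ioo (0:ℝ) 1,
        closure (s • sder f x u₁ + (1 - s) • sder f x u₂)
          ⊆ sder f x (s • u₁ + (1 - s) • u₂)) := by
  have hconv : ∀ y, Convex ℝ (f y) := fun y => by
    rw [hG y]; exact (convex_convexHull ℝ _).closure
  have hclosed : ∀ y, IsClosed (f y) := fun y => by
    rw [hG y]; exact isClosed_closure
  refine ⟨sder_eq f hf hconv x u, ?_, ?_, ?_⟩
  · -- sder f x 0 = recCone (f x)
    rw [sder_eq f hf hconv x 0]
    have hR : recCone (f x) = resid (f x) (f x) := by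
      ext z; simp only [recCone, resid, mem_setOf_eq, hx, true_and]
    have hsm : ∀ t : ℝ, 0 < t → (1 / t) • resid (f x) (f x) = resid (f x) (f x) := by
      intro t ht
      apply Subset.antisymm
      · rintro y ⟨w, hw, rfl⟩
        exact resid_self_smul_mem (hconv x) hw (by positivity)
      · intro z hz
        exact ⟨t • z, resid_self_smul_mem (hconv x) hz ht,
          by show (1 / t) • t • z = z; rw [smul_smul, one_div_mul_cancel ht.ne', one_smul]⟩
    have hU : (⋃ t ∈ Ioi (0:ℝ), (1 / t) • resid (f (x + t • (0:X))) (f x))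
        = resid (f x) (f x) := by
      have hx0 : ∀ t : ℝ, x + t • (0:X) = x := fun t => by rw [smul_zero, add_zero]
      apply Subset.antisymm
      · refine iUnion₂_subset fun t ht => ?_
        have ht' : (0:ℝ) < t := ht
        rw [hx0 t, hsm t ht']
      · intro z hz
        refine mem_iUnion₂.2 ⟨1, mem_Ioi.2 one_pos, ?_⟩
        rw [hx0 1, hsm 1 one_pos]; exact hz
    rw [hU, ((isClosed_resid (hclosed x)).closure_eq : closure (resid (f x) (f x)) = _), hR]
  · -- positive homogeneity
    intro s hs
    rw [sder_eq f hf hconv x (s • u), sder_eq f hf hconv x u, ← closure_smul₀' hs.ne']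
    refine congrArg closure ?_
    have hper : ∀ t : ℝ, 0 < t →
        s • ((1 / (t * s)) • resid (f (x + (t * s) • u)) (f x))
          = (1 / t) • resid (f (x + t • (s • u))) (f x) := by
      intro t ht
      rw [← mul_smul, show s * (1 / (t * s)) = 1 / t by field_simp, ← smul_smul t s u]
    apply Subset.antisymm
    · refine iUnion₂_subset fun t ht => ?_
      have ht' : (0:ℝ) < t := ht
      rw [← hper t ht']
      exact Set.smul_set_mono
        (subset_iUnion₂_of_subset (t * s) (mul_pos ht' hs) subset_rfl)
    · rw [smul_set_iUnion₂]
      refine iUnion₂_subset fun r hr => ?_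
      have hr' : (0:ℝ) < r := hr
      have hrs : (0:ℝ) < r / s := div_pos hr' hs
      refine subset_iUnion₂_of_subset (r / s) hrs ?_
      rw [← hper (r / s) hrs, div_mul_cancel₀ r hs.ne']
  · -- sublinearity
    intro u₁ u₂ s hs
    rw [sder_eq f hf hconv x u₁, sder_eq f hf hconv x u₂,
      sder_eq f hf hconv x (s • u₁ + (1 - s) • u₂)]
    set U₁ := ⋃ t ∈ Ioi (0:ℝ), (1 / t) • resid (f (x + t • u₁)) (f x) with hU₁
    set U₂ := ⋃ t ∈ Ioi (0:ℝ), (1 / t) • resid (f (x + t • u₂)) (f x) with hU₂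
    set U := ⋃ t ∈ Ioi (0:ℝ),
      (1 / t) • resid (f (x + t • (s • u₁ + (1 - s) • u₂))) (f x) with hUdef
    have hstep : s • U₁ + (1 - s) • U₂ ⊆ U := by
      rintro y ⟨y₁, hy₁, y₂, hy₂, rfl⟩
      obtain ⟨z₁, hz₁, rfl⟩ := hy₁
      obtain ⟨z₂, hz₂, rfl⟩ := hy₂
      rw [hU₁] at hz₁; rw [hU₂] at hz₂
      simp only [mem_iUnion, exists_prop] at hz₁ hz₂
      obtain ⟨t₁, ht₁, hz₁⟩ := hz₁
      obtain ⟨t₂, ht₂, hz₂⟩ := hz₂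
      have htm : (0:ℝ) < min t₁ t₂ := lt_min ht₁ ht₂
      have h₁ := quot_mono f hf x u₁ htm (min_le_left _ _) hz₁
      have h₂ := quot_mono f hf x u₂ htm (min_le_right _ _) hz₂
      set t := min t₁ t₂
      show s • z₁ + (1 - s) • z₂ ∈ U
      rw [hUdef]
      simp only [mem_iUnion, exists_prop]
      refine ⟨t, htm, ?_⟩
      rw [mem_smul_resid htm] at h₁ h₂
      rw [mem_smul_resid htm]
      intro b hb
      have hsub := hf (x + t • u₁) (x + t • u₂) s hs
      have hcal : s • (x + t • u₁) + (1 - s) • (x + t • u₂)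
          = x + t • (s • u₁ + (1 - s) • u₂) := by module
      rw [hcal] at hsub
      have he : b + t • (s • z₁ + (1 - s) • z₂)
          = s • (b + t • z₁) + (1 - s) • (b + t • z₂) := by module
      rw [he]
      exact hsub (subset_closure
        (Set.add_mem_add (Set.smul_mem_smul_set (h₁ b hb)) (Set.smul_mem_smul_set (h₂ b hb))))
    have hc1 : s • closure U₁ + (1 - s) • closure U₂ ⊆ closure (s • U₁ + (1 - s) • U₂) := by
      have e1 : s • closure U₁ = closure (s • U₁) := (closure_smul₀' hs.1.ne' U₁).symm
      have e2 : (1 - s) • closure U₂ = closure ((1 - s) • U₂) :=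
        (closure_smul₀' (by linarith [hs.2] : (1:ℝ) - s ≠ 0) U₂).symm
      rw [e1, e2]
      exact closure_add_closure_subset _ _
    calc closure (s • closure U₁ + (1 - s) • closure U₂)
        ⊆ closure (closure (s • U₁ + (1 - s) • U₂)) := closure_mono hc1
      _ = closure (s • U₁ + (1 - s) • U₂) := closure_closure
      _ ⊆ closure U := closure_mono hstep
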